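/- (ℓ1 bound outside the restricted set.) Under the basic Lasso inequality setup, if ‖(Υ⁰δ)_{T^c}‖₁ > 2c₀‖(Υ⁰δ)_T‖₁ with c₀ = (uc+1)/(ℓc−1), then ‖Υ⁰δ‖₁ ≤ (1 + 1/(2c₀)) · (2c/(ℓc−1)) · (n/λ) · c_s², and in particular ‖Υ⁰δ‖₁ ≤ 3c₀ n c_s²/λ. -/

import Mathlib

/-- Empirical prediction norm `‖Fδ‖_{2,n} = ((1/n)∑ᵢ (fᵢ'δ)²)^{1/2}`. -/
noncomputable def predNorm (n p : ℕ) (F : Matrix (Fin n) (Fin p) ℝ)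
    (δ : Fin p → ℝ) : ℝ :=
  Real.sqrt ((1 / (n : ℝ)) * ∑ i, (∑ j, F i j * δ j) ^ 2)

set_option maxHeartbeats 1000000 in
/-- ℓ1 bound outside the restricted set: if `‖(Υ⁰δ)_{Tᶜ}‖₁ > 2c₀‖(Υ⁰δ)_T‖₁`, then
`‖Υ⁰δ‖₁ ≤ (1 + 1/(2c₀))(2c/(ℓc−1))(n/λ)c_s²` and hence `‖Υ⁰δ‖₁ ≤ 3c₀ n c_s²/λ`.
`‖(Υ⁰δ)_{Tᶜ}‖₁ ≤ c₀‖(Υ⁰δ)_T‖₁` with `c₀ = (uc+1)/(ℓc−1)`. -/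
theorem lasso_ell1_outside_restricted_set
    (n p s : ℕ) (hn : 0 < n)
    (f : Matrix (Fin n) (Fin p) ℝ)
    (β₀ : Fin p → ℝ) (T : Finset (Fin p))
    (hT : T = Finset.univ.filter (fun j => β₀ j ≠ 0)) (hTs : T.card ≤ s)
    (d a v : Fin n → ℝ)
    (hmodel : ∀ i, d i = (∑ j, f i j * β₀ j) + a i + v i)
    (cs : ℝ) (hcs0 : 0 ≤ cs)
    (hcs : Real.sqrt ((1 / (n : ℝ)) * ∑ i, (a i) ^ 2) ≤ cs)
    (Υ0 Υ : Fin p → ℝ) (hΥ0 : ∀ j, 0 < Υ0 j)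
    (c ℓ u lam : ℝ) (hc : 1 < c) (hu : 1 ≤ u) (hℓ1 : ℓ ≤ 1) (hℓc : 1 / c < ℓ)
    (hload : ∀ j, ℓ * Υ0 j ≤ Υ j ∧ Υ j ≤ u * Υ0 j)
    (S : Fin p → ℝ)
    (hS : ∀ j, S j = 2 * ((1 / (n : ℝ)) * ∑ i, f i j * v i) / Υ0 j)
    (hlam : ∀ j, c * |S j| ≤ lam / n)
    (βhat : Fin p → ℝ)
    (hopt : ∀ β : Fin p → ℝ,
      (1 / (n : ℝ)) * (∑ i, (d i - ∑ j, f i j * βhat j) ^ 2)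
          + (lam / n) * ∑ j, Υ j * |βhat j|
        ≤ (1 / (n : ℝ)) * (∑ i, (d i - ∑ j, f i j * β j) ^ 2)
          + (lam / n) * ∑ j, Υ j * |β j|)
    (δ : Fin p → ℝ) (hδ : δ = βhat - β₀)
    (c0 : ℝ) (hc0 : c0 = (u * c + 1) / (ℓ * c - 1))
    (hlampos : 0 < lam)
    (hout : 2 * c0 * (∑ j ∈ T, |Υ0 j * δ j|) < ∑ j ∈ Tᶜ, |Υ0 j * δ j|) :
    (∑ j, |Υ0 j * δ j|)
        ≤ (1 + 1 / (2 * c0)) * (2 * c / (ℓ * c - 1)) * ((n : ℝ) / lam) * cs ^ 2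
      ∧ (∑ j, |Υ0 j * δ j|) ≤ 3 * c0 * n * cs ^ 2 / lam := by
  -- basic positivity facts
  have hn' : (0:ℝ) < n := by exact_mod_cast hn
  have hcpos : (0:ℝ) < c := lt_trans one_pos hc
  have hℓc1 : (1:ℝ) < ℓ * c := by
    have h := (div_lt_iff₀ hcpos).mp hℓc
    linarith
  have hden : (0:ℝ) < ℓ * c - 1 := by linarith
  have hℓpos : (0:ℝ) < ℓ := by
    have : (0:ℝ) < 1 / c := by positivity
    linarith
  have hLpos : (0:ℝ) < lam / n := div_pos hlampos hn'
  have hc0e : c0 * (ℓ * c - 1) = u * c + 1 := by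
    rw [hc0]; exact div_mul_cancel₀ _ hden.ne'
  have hc0_1 : (1:ℝ) < c0 := by
    rw [hc0, lt_div_iff₀ hden]; nlinarith
  have hc0pos : (0:ℝ) < c0 := by linarith
  have hδj : ∀ j, δ j = βhat j - β₀ j := by
    intro j; rw [hδ]; rfl
  -- abbreviations via notation of sums (kept explicit)
  have hmT_nn : (0:ℝ) ≤ ∑ j ∈ T, |Υ0 j * δ j| :=
    Finset.sum_nonneg fun j _ => abs_nonneg _
  have hmc_nn : (0:ℝ) ≤ ∑ j ∈ Tᶜ, |Υ0 j * δ j| :=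
    Finset.sum_nonneg fun j _ => abs_nonneg _
  have hsplit : (∑ j, |Υ0 j * δ j|)
      = (∑ j ∈ T, |Υ0 j * δ j|) + ∑ j ∈ Tᶜ, |Υ0 j * δ j| :=
    (Finset.sum_add_sum_compl T _).symm
  -- rewrite residuals
  have h1 : ∀ i, d i - ∑ j, f i j * βhat j = a i + v i - ∑ j, f i j * δ j := by
    intro i
    have hw : ∑ j, f i j * βhat j = (∑ j, f i j * β₀ j) + ∑ j, f i j * δ j := by
      rw [← Finset.sum_add_distrib]
      refine Finset.sum_congr rfl fun j _ => ?_
      rw [hδj]; ring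
    rw [hmodel i, hw]; ring
  have h2 : ∀ i, d i - ∑ j, f i j * β₀ j = a i + v i := by
    intro i; rw [hmodel i]; ring
  -- the basic inequality
  have hH := hopt β₀
  simp only [h1, h2] at hH
  have expand : ∑ i, (a i + v i - ∑ j, f i j * δ j) ^ 2
        + 2 * (∑ i, a i * ∑ j, f i j * δ j) + 2 * (∑ i, v i * ∑ j, f i j * δ j)
      = (∑ i, (a i + v i) ^ 2) + ∑ i, (∑ j, f i j * δ j) ^ 2 := by
    rw [Finset.mul_sum, Finset.mul_sum, ← Finset.sum_add_distrib,
      ← Finset.sum_add_distrib, ← Finset.sum_add_distrib]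
    exact Finset.sum_congr rfl fun i _ => by ring
  have hinv : (0:ℝ) < 1 / (n:ℝ) := by positivity
  have hk : (1/(n:ℝ)) * ∑ i, (∑ j, f i j * δ j) ^ 2
      ≤ 2 * ((1/(n:ℝ)) * ∑ i, a i * ∑ j, f i j * δ j)
        + 2 * ((1/(n:ℝ)) * ∑ i, v i * ∑ j, f i j * δ j)
        + (lam/n) * ((∑ j, Υ j * |β₀ j|) - ∑ j, Υ j * |βhat j|) := by
    nlinarith [hH, expand, hinv,
      mul_le_mul_of_nonneg_left hH hinv.le]
  -- Step B : Cauchy-Schwarz for the a-term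
  have hSa_nn : (0:ℝ) ≤ ∑ i, (a i) ^ 2 := Finset.sum_nonneg fun i _ => sq_nonneg _
  have hSw_nn : (0:ℝ) ≤ ∑ i, (∑ j, f i j * δ j) ^ 2 :=
    Finset.sum_nonneg fun i _ => sq_nonneg _
  have hB : 2 * ((1/(n:ℝ)) * ∑ i, a i * ∑ j, f i j * δ j)
      ≤ cs ^ 2 + (1/(n:ℝ)) * ∑ i, (∑ j, f i j * δ j) ^ 2 := by
    set t := Real.sqrt ((1/(n:ℝ)) * ∑ i, (∑ j, f i j * δ j) ^ 2) with ht
    have ht0 : 0 ≤ t := Real.sqrt_nonneg _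
    have ht2 : t ^ 2 = (1/(n:ℝ)) * ∑ i, (∑ j, f i j * δ j) ^ 2 :=
      Real.sq_sqrt (by positivity)
    have hA2 : (Real.sqrt ((1/(n:ℝ)) * ∑ i, (a i) ^ 2)) ^ 2
        = (1/(n:ℝ)) * ∑ i, (a i) ^ 2 := Real.sq_sqrt (by positivity)
    have hcsA : (1/(n:ℝ)) * ∑ i, (a i) ^ 2 ≤ cs ^ 2 := by
      nlinarith [hcs, hA2, Real.sqrt_nonneg ((1/(n:ℝ)) * ∑ i, (a i) ^ 2), hcs0]
    have hCS : (∑ i, a i * ∑ j, f i j * δ j) ^ 2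
        ≤ (∑ i, (a i) ^ 2) * ∑ i, (∑ j, f i j * δ j) ^ 2 :=
      Finset.sum_mul_sq_le_sq_mul_sq _ _ _
    have hx : (1/(n:ℝ)) * (∑ i, a i * ∑ j, f i j * δ j) ≤ cs * t := by
      have hsq : ((1/(n:ℝ)) * ∑ i, a i * ∑ j, f i j * δ j) ^ 2 ≤ (cs * t) ^ 2 := by
        have h3 : ((1/(n:ℝ)) * ∑ i, a i * ∑ j, f i j * δ j) ^ 2
            = (1/(n:ℝ))^2 * (∑ i, a i * ∑ j, f i j * δ j) ^ 2 := by ring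
        have h4 : (cs * t) ^ 2 = cs ^ 2 * t ^ 2 := by ring
        rw [h3, h4, ht2]
        calc (1/(n:ℝ))^2 * (∑ i, a i * ∑ j, f i j * δ j) ^ 2
            ≤ (1/(n:ℝ))^2 * ((∑ i, (a i) ^ 2) * ∑ i, (∑ j, f i j * δ j) ^ 2) := by
              exact mul_le_mul_of_nonneg_left hCS (by positivity)
          _ = ((1/(n:ℝ)) * ∑ i, (a i) ^ 2) * ((1/(n:ℝ)) * ∑ i, (∑ j, f i j * δ j) ^ 2) := by
              ring
          _ ≤ cs ^ 2 * ((1/(n:ℝ)) * ∑ i, (∑ j, f i j * δ j) ^ 2) := by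
              exact mul_le_mul_of_nonneg_right hcsA (by positivity)
      have hct0 : 0 ≤ cs * t := mul_nonneg hcs0 ht0
      nlinarith [hsq, hct0]
    nlinarith [hx, sq_nonneg (cs - t), ht2]
  -- Step C : the noise term
  have hSj : ∀ j, S j * Υ0 j = 2 * ((1/(n:ℝ)) * ∑ i, f i j * v i) := by
    intro j
    rw [hS j]
    field_simp [(hΥ0 j).ne']
  have hvw : 2 * ((1/(n:ℝ)) * ∑ i, v i * ∑ j, f i j * δ j)
      = ∑ j, S j * (Υ0 j * δ j) := by
    have swap : ∑ i, v i * ∑ j, f i j * δ j = ∑ j, δ j * ∑ i, f i j * v i := by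
      simp_rw [Finset.mul_sum]
      rw [Finset.sum_comm]
      refine Finset.sum_congr rfl fun j _ => Finset.sum_congr rfl fun i _ => by ring
    rw [swap, Finset.mul_sum, Finset.mul_sum]
    refine Finset.sum_congr rfl fun j _ => ?_
    linear_combination (-(δ j)) * hSj j
  have hC : c * (∑ j, S j * (Υ0 j * δ j))
      ≤ (lam/n) * ∑ j, |Υ0 j * δ j| := by
    rw [Finset.mul_sum, Finset.mul_sum]
    refine Finset.sum_le_sum fun j _ => ?_
    have h := hlam j
    have h1 : c * (S j * (Υ0 j * δ j)) ≤ c * |S j| * |Υ0 j * δ j| := by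
      have : S j * (Υ0 j * δ j) ≤ |S j| * |Υ0 j * δ j| := by
        rw [← abs_mul]; exact le_abs_self _
      nlinarith [this]
    calc c * (S j * (Υ0 j * δ j)) ≤ c * |S j| * |Υ0 j * δ j| := h1
      _ ≤ (lam/n) * |Υ0 j * δ j| :=
          mul_le_mul_of_nonneg_right h (abs_nonneg _)
  -- Step D : penalty term
  have hD : (∑ j, Υ j * |β₀ j|) - ∑ j, Υ j * |βhat j|
      ≤ u * (∑ j ∈ T, |Υ0 j * δ j|) - ℓ * ∑ j ∈ Tᶜ, |Υ0 j * δ j| := by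
    rw [← Finset.sum_add_sum_compl T (fun j => Υ j * |β₀ j|),
      ← Finset.sum_add_sum_compl T (fun j => Υ j * |βhat j|),
      Finset.mul_sum, Finset.mul_sum]
    have hTpart : ∑ j ∈ T, Υ j * |β₀ j| - ∑ j ∈ T, Υ j * |βhat j|
        ≤ ∑ j ∈ T, u * |Υ0 j * δ j| := by
      rw [← Finset.sum_sub_distrib]
      refine Finset.sum_le_sum fun j _ => ?_
      have hΥpos : 0 < Υ j := lt_of_lt_of_le (mul_pos hℓpos (hΥ0 j)) (hload j).1
      have habs : |β₀ j| - |βhat j| ≤ |δ j| := by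
        have := abs_sub_abs_le_abs_sub (β₀ j) (βhat j)
        have h5 : |β₀ j - βhat j| = |δ j| := by rw [hδj]; rw [abs_sub_comm]
        linarith
      calc Υ j * |β₀ j| - Υ j * |βhat j| = Υ j * (|β₀ j| - |βhat j|) := by ring
        _ ≤ Υ j * |δ j| := mul_le_mul_of_nonneg_left habs hΥpos.le
        _ ≤ (u * Υ0 j) * |δ j| := mul_le_mul_of_nonneg_right (hload j).2 (abs_nonneg _)
        _ = u * |Υ0 j * δ j| := by rw [abs_mul, abs_of_pos (hΥ0 j)]; ring
    have hTcpart : ∑ j ∈ Tᶜ, Υ j * |β₀ j| - ∑ j ∈ Tᶜ, Υ j * |βhat j|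
        ≤ ∑ j ∈ Tᶜ, -(ℓ * |Υ0 j * δ j|) := by
      rw [← Finset.sum_sub_distrib]
      refine Finset.sum_le_sum fun j hj => ?_
      have hb0 : β₀ j = 0 := by
        by_contra hne
        have : j ∈ T := by rw [hT]; simp [hne]
        exact (Finset.mem_compl.mp hj) this
      have hbh : βhat j = δ j := by rw [hδj, hb0]; ring
      rw [hb0, hbh]
      simp only [abs_zero, mul_zero, zero_sub]
      have : ℓ * Υ0 j * |δ j| ≤ Υ j * |δ j| :=
        mul_le_mul_of_nonneg_right (hload j).1 (abs_nonneg _)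
      rw [abs_mul, abs_of_pos (hΥ0 j)]
      nlinarith [this]
    have hsum : ∑ j ∈ Tᶜ, -(ℓ * |Υ0 j * δ j|) = -∑ j ∈ Tᶜ, ℓ * |Υ0 j * δ j| := by
      rw [Finset.sum_neg_distrib]
    rw [Finset.mul_sum] at *
    linarith [hTpart, hTcpart, hsum.le, hsum.ge]
  -- Combine everything
  have hE0 : 0 ≤ c * cs ^ 2 + (lam/n) * ((∑ j ∈ T, |Υ0 j * δ j|) + ∑ j ∈ Tᶜ, |Υ0 j * δ j|)
      + c * ((lam/n) * (u * (∑ j ∈ T, |Υ0 j * δ j|) - ℓ * ∑ j ∈ Tᶜ, |Υ0 j * δ j|)) := by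
    rw [hvw] at hk
    rw [hsplit] at hC
    linarith [mul_le_mul_of_nonneg_left hk hcpos.le,
      mul_le_mul_of_nonneg_left hB hcpos.le, hC,
      mul_le_mul_of_nonneg_left hD (mul_nonneg hcpos.le hLpos.le)]
  -- from hout, (uc+1) mT is small
  have h5 : 2 * ((u * c + 1) * ∑ j ∈ T, |Υ0 j * δ j|)
      ≤ (ℓ * c - 1) * ∑ j ∈ Tᶜ, |Υ0 j * δ j| := by
    have h := mul_lt_mul_of_pos_left hout hden
    have h' : (ℓ * c - 1) * (2 * c0 * ∑ j ∈ T, |Υ0 j * δ j|)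
        = 2 * ((u * c + 1) * ∑ j ∈ T, |Υ0 j * δ j|) := by
      rw [← hc0e]; ring
    linarith
  -- bound on mc
  have hmc_b : (lam/n) * ((ℓ * c - 1) * ∑ j ∈ Tᶜ, |Υ0 j * δ j|) ≤ 2 * c * cs ^ 2 := by
    linarith [hE0, mul_le_mul_of_nonneg_left h5 hLpos.le]
  have hne_n : (n:ℝ) ≠ 0 := ne_of_gt hn'
  have hne_l : lam ≠ 0 := ne_of_gt hlampos
  have hne_d : ℓ * c - 1 ≠ 0 := ne_of_gt hden
  have hne_c0 : c0 ≠ 0 := ne_of_gt hc0pos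
  -- first goal
  have goal1 : (∑ j, |Υ0 j * δ j|)
      ≤ (1 + 1 / (2 * c0)) * (2 * c / (ℓ * c - 1)) * ((n : ℝ) / lam) * cs ^ 2 := by
    have hK : (0:ℝ) < 2 * c0 * (ℓ * c - 1) * (lam/n) :=
      mul_pos (mul_pos (by linarith) hden) hLpos
    rw [← mul_le_mul_iff_right₀ hK, hsplit]
    have hRHS : 2 * c0 * (ℓ * c - 1) * (lam/n)
        * ((1 + 1 / (2 * c0)) * (2 * c / (ℓ * c - 1)) * ((n : ℝ) / lam) * cs ^ 2)
        = (2 * c0 + 1) * (2 * c) * cs ^ 2 := by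
      field_simp
    rw [hRHS]
    have hout' : 2 * c0 * (∑ j ∈ T, |Υ0 j * δ j|) ≤ ∑ j ∈ Tᶜ, |Υ0 j * δ j| := hout.le
    have s1 := mul_le_mul_of_nonneg_left hout' (mul_nonneg hden.le hLpos.le)
    have s2 := mul_le_mul_of_nonneg_left hmc_b hc0pos.le
    linarith [hmc_b, s1, s2]
  refine ⟨goal1, ?_⟩
  -- second goal
  have ha : 1 + 1 / (2 * c0) ≤ 3 / 2 := by
    have h7 : 1 / (2 * c0) ≤ 1 / 2 := by
      apply one_div_le_one_div_of_le <;> linarith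
    linarith
  have hb : 2 * c / (ℓ * c - 1) ≤ 2 * c0 := by
    rw [div_le_iff₀ hden]
    have h9 : 1 * c ≤ u * c := mul_le_mul_of_nonneg_right hu hcpos.le
    linarith [hc0e, h9]
  have hbpos : 0 < 2 * c / (ℓ * c - 1) := div_pos (by linarith) hden
  have h6 : (1 + 1 / (2 * c0)) * (2 * c / (ℓ * c - 1)) ≤ 3 * c0 := by
    calc (1 + 1 / (2 * c0)) * (2 * c / (ℓ * c - 1))
        ≤ (3/2) * (2 * c / (ℓ * c - 1)) := mul_le_mul_of_nonneg_right ha hbpos.le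
      _ ≤ (3/2) * (2 * c0) := by linarith [hb]
      _ = 3 * c0 := by ring
  have hfac : (0:ℝ) ≤ ((n:ℝ)/lam) * cs ^ 2 := by positivity
  have h8 : (1 + 1 / (2 * c0)) * (2 * c / (ℓ * c - 1)) * ((n : ℝ) / lam) * cs ^ 2
      ≤ 3 * c0 * n * cs ^ 2 / lam := by
    have := mul_le_mul_of_nonneg_right h6 hfac
    calc (1 + 1 / (2 * c0)) * (2 * c / (ℓ * c - 1)) * ((n : ℝ) / lam) * cs ^ 2
        = (1 + 1 / (2 * c0)) * (2 * c / (ℓ * c - 1)) * (((n : ℝ) / lam) * cs ^ 2) := by ring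
      _ ≤ 3 * c0 * (((n : ℝ) / lam) * cs ^ 2) := this
      _ = 3 * c0 * n * cs ^ 2 / lam := by ring
  linarith [goal1, h8]
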